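/- For any natural numbers r > k ≥ 0, there exists a polynomial P of degree at most k such that A_{r,k}^2(x) = P(x^2)·(1-x^2)^{2r-2k-1} for all real x, where A_{r,k}^2(x) = Q_{r-k-1}(x)^2 (1-x^2)/(2(2r-2k-1)) - Σ_{n=r-k}^{r-1} Q_n^{(n+k-r)}(x)^2 (n+1/2) and Q_n(x) = (1-x^2)^n/(2^n n!). -/

import Mathlib

open Polynomial

lemma natDeg_mul_deriv_le (q p : Polynomial ℝ) (hq : q.natDegree ≤ 1) :
    (q * derivative p).natDegree ≤ p.natDegree := by
  by_cases hd : derivative p = 0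
  · simp [hd]
  · have h1 : 1 ≤ p.natDegree := by
      rcases Nat.eq_zero_or_pos p.natDegree with h0 | h0
      · exact absurd (by rw [Polynomial.eq_C_of_natDegree_eq_zero h0]; simp) hd
      · exact h0
    have h2 := Polynomial.natDegree_derivative_le p
    exact natDegree_mul_le.trans (by omega)

lemma key (n : ℕ) : ∀ s, s ≤ n → ∃ a b : Polynomial ℝ,
    derivative^[s] ((1 - X^2 : Polynomial ℝ)^n)
      = (1 - X^2)^(n-s) * (a.comp (X^2) + X * b.comp (X^2)) ∧
    a.natDegree ≤ s/2 ∧ b.natDegree ≤ s/2 ∧ (Even s → b = 0) ∧ (¬ Even s → a = 0) := by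
  intro s
  induction s with
  | zero =>
    intro _
    exact ⟨1, 0, by simp, by simp, by simp, fun _ => rfl, fun h => (h ⟨0, rfl⟩).elim⟩
  | succ s ih =>
    intro hs
    obtain ⟨a, b, heq, hda, hdb, hpa, hpb⟩ := ih (Nat.le_of_succ_le hs)
    refine ⟨C (-(2*((n-s:ℕ):ℝ))) * (X*b) + (1-X)*b + C 2 * ((1-X) * (X * derivative b)),
            C (-(2*((n-s:ℕ):ℝ))) * a + C 2 * ((1-X) * derivative a), ?_, ?_, ?_, ?_, ?_⟩
    · have h1 : n - (s+1) = n - s - 1 := by omega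
      have h2 : (1 - X^2 : Polynomial ℝ)^(n-s) = (1 - X^2)^(n-s-1) * (1-X^2) := by
        rw [← pow_succ]; congr 1; omega
      rw [Function.iterate_succ_apply', heq, h1]
      rw [derivative_mul, derivative_pow, h2]
      simp only [derivative_add, derivative_mul, derivative_comp, derivative_X, derivative_one,
        derivative_sub, derivative_X_pow, add_comp, mul_comp, sub_comp, C_comp, X_comp, one_comp,
        neg_comp, natCast_comp, ofNat_comp, map_neg, map_mul, map_ofNat, Nat.cast_ofNat,
        pow_one, map_one]
      ring
    · rcases Nat.even_or_odd s with he | ho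
      · have hb0 : b = 0 := hpa he
        simp [hb0]
      · have hmod : s % 2 = 1 := Nat.odd_iff.mp ho
        have hs2 : (s+1)/2 = s/2 + 1 := by omega
        rw [hs2]
        refine natDegree_add_le_of_degree_le (natDegree_add_le_of_degree_le ?_ ?_) ?_
        · exact natDegree_mul_le.trans (by
            have := natDegree_mul_le (p := (X : Polynomial ℝ)) (q := b)
            simp only [natDegree_C, natDegree_X] at *; omega)
        · refine natDegree_mul_le.trans ?_
          have : (1 - X : Polynomial ℝ).natDegree ≤ 1 :=
            (natDegree_sub_le _ _).trans (by simp)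
          omega
        · refine natDegree_mul_le.trans ?_
          have h3 : ((1-X) * (X * derivative b) : Polynomial ℝ).natDegree ≤ 1 + b.natDegree := by
            refine natDegree_mul_le.trans ?_
            have h4 := natDeg_mul_deriv_le X b (by simp)
            have : (1 - X : Polynomial ℝ).natDegree ≤ 1 :=
              (natDegree_sub_le _ _).trans (by simp)
            omega
          simp only [natDegree_C]; omega
    · rcases Nat.even_or_odd s with he | ho
      · have hs2 : (s+1)/2 = s/2 := by
          obtain ⟨t, rfl⟩ := he; omega
        rw [hs2]
        refine natDegree_add_le_of_degree_le ?_ ?_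
        · exact natDegree_mul_le.trans (by simp only [natDegree_C]; omega)
        · refine natDegree_mul_le.trans ?_
          have h4 := natDeg_mul_deriv_le (1-X) a ((natDegree_sub_le _ _).trans (by simp))
          simp only [natDegree_C]; omega
      · have ha0 : a = 0 := hpb (Nat.not_even_iff_odd.mpr ho)
        simp [ha0]
    · intro he
      have ha0 : a = 0 := hpb (Nat.even_add_one.mp he)
      simp [ha0]
    · intro he
      rw [Nat.even_add_one, not_not] at he
      have hb0 : b = 0 := hpa he
      simp [hb0]

noncomputable def Q (n : ℕ) : ℝ → ℝ := fun x => (1 - x^2)^n / (2^n * n.factorial)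

noncomputable def A2 (r k : ℕ) : ℝ → ℝ := fun x =>
  (Q (r-k-1) x)^2 * (1 - x^2) / (2 * (2*(r:ℝ) - 2*k - 1)) -
    ∑ n ∈ Finset.Icc (r-k) (r-1), (iteratedDeriv (n+k-r) (Q n) x)^2 * ((n:ℝ) + 1/2)

lemma iteratedDeriv_eval (p : Polynomial ℝ) (s : ℕ) :
    iteratedDeriv s (fun y => p.eval y) = fun x => (derivative^[s] p).eval x := by
  induction s with
  | zero => rw [iteratedDeriv_zero]; simp
  | succ s ih =>
    rw [iteratedDeriv_succ, ih, Function.iterate_succ_apply']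
    funext x
    exact Polynomial.deriv (p := derivative^[s] p)

lemma Q_eq (n : ℕ) : Q n = fun x => (C (((2:ℝ)^n * n.factorial)⁻¹) * (1 - X^2)^n).eval x := by
  funext x
  simp [Q, div_eq_mul_inv, mul_comm]

lemma termwise (r k : ℕ) (hrk : k < r) (n : ℕ) :
    ∃ c : Polynomial ℝ, n ∈ Finset.Icc (r-k) (r-1) → (c.natDegree ≤ k ∧
      ∀ x : ℝ, (iteratedDeriv (n+k-r) (Q n) x)^2 * ((n:ℝ) + 1/2)
        = c.eval (x^2) * (1 - x^2)^(2*r - 2*k - 1)) := by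
  by_cases hn : n ∈ Finset.Icc (r-k) (r-1)
  case neg => exact ⟨0, fun h => absurd h hn⟩
  simp only [Finset.mem_Icc] at hn
  set s := n + k - r with hs
  have hsn : s ≤ n := by omega
  have hk1 : 1 ≤ k := by omega
  have hsk : s ≤ k - 1 := by omega
  obtain ⟨a, b, heq, hda, hdb, hpa, hpb⟩ := key n s hsn
  set cv : ℝ := ((2:ℝ)^n * n.factorial)⁻¹ with hcv
  refine ⟨C (cv^2 * ((n:ℝ) + 1/2)) * ((1-X) * (a^2 + X * b^2)), fun _ => ⟨?_, ?_⟩⟩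
  · have h1 : ((1-X : Polynomial ℝ)).natDegree ≤ 1 := (natDegree_sub_le _ _).trans (by simp)
    have hab : (a^2 + X * b^2 : Polynomial ℝ).natDegree ≤ s := by
      rcases Nat.even_or_odd s with he | ho
      · have hb0 : b = 0 := hpa he
        have hm : s % 2 = 0 := Nat.even_iff.mp he
        have h2 := natDegree_pow_le (p := a) (n := 2)
        calc (a^2 + X * b^2 : Polynomial ℝ).natDegree = (a^2).natDegree := by rw [hb0]; simp
        _ ≤ s := by omega
      · have ha0 : a = 0 := hpb (Nat.not_even_iff_odd.mpr ho)
        have hm : s % 2 = 1 := Nat.odd_iff.mp ho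
        have h2 := natDegree_pow_le (p := b) (n := 2)
        have h3 := natDegree_mul_le (p := (X : Polynomial ℝ)) (q := b^2)
        calc (a^2 + X * b^2 : Polynomial ℝ).natDegree = (X * b^2).natDegree := by rw [ha0]; simp
        _ ≤ s := by simp only [natDegree_X] at h3; omega
    refine natDegree_mul_le.trans ?_
    have := natDegree_mul_le (p := (1-X : Polynomial ℝ)) (q := a^2 + X * b^2)
    simp only [natDegree_C]; omega
  · intro x
    have hnr : n - s = r - k := by omega
    have hQ : iteratedDeriv s (Q n) x = cv * ((1-x^2)^(r-k) * (a.eval (x^2) + x * b.eval (x^2))) := by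
      rw [Q_eq, iteratedDeriv_eval, Polynomial.iterate_derivative_C_mul, heq, hnr]
      simp only [eval_mul, eval_C, eval_add, eval_comp, eval_pow, eval_X, eval_one, eval_sub]
      rw [hcv]
    rw [hQ]
    have habx : a.eval (x^2) * b.eval (x^2) = 0 := by
      rcases Nat.even_or_odd s with he | ho
      · rw [hpa he]; simp
      · rw [hpb (Nat.not_even_iff_odd.mpr ho)]; simp
    have hpow : ((1-x^2)^(r-k))^2 = (1 - x^2)^(2*r-2*k-1) * (1-x^2) := by
      rw [← pow_mul, ← pow_succ]
      congr 1
      omega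
    simp only [mul_pow, hpow, eval_mul, eval_C, eval_add, eval_pow, eval_X, eval_sub, eval_one]
    linear_combination (cv^2 * ((n:ℝ)+1/2) * (1-x^2)^(2*r-2*k-1) * (1-x^2) * 2 * x) * habx

theorem stmt19 (r k : ℕ) (hrk : k < r) :
    ∃ P : Polynomial ℝ, P.degree ≤ k ∧
      ∀ x : ℝ, A2 r k x = P.eval (x^2) * (1 - x^2)^(2*r - 2*k - 1) := by
  choose c hc using termwise r k hrk
  set e0 : ℝ := (((2:ℝ)^(r-k-1) * (r-k-1).factorial)⁻¹)^2 / (2*(2*(r:ℝ)-2*k-1)) with he0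
  refine ⟨C e0 - ∑ n ∈ Finset.Icc (r-k) (r-1), c n, ?_, ?_⟩
  · have h1 : (C e0 - ∑ n ∈ Finset.Icc (r-k) (r-1), c n).natDegree ≤ k := by
      refine (natDegree_sub_le _ _).trans ?_
      have h2 : (∑ n ∈ Finset.Icc (r-k) (r-1), c n).natDegree ≤ k :=
        natDegree_sum_le_of_forall_le _ _ (fun i hi => ((hc i) hi).1)
      simp only [natDegree_C]; omega
    exact degree_le_natDegree.trans (by exact_mod_cast h1)
  · intro x
    have hsum : ∑ n ∈ Finset.Icc (r-k) (r-1), (iteratedDeriv (n+k-r) (Q n) x)^2 * ((n:ℝ) + 1/2)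
        = (∑ n ∈ Finset.Icc (r-k) (r-1), (c n).eval (x^2)) * (1 - x^2)^(2*r - 2*k - 1) := by
      rw [Finset.sum_mul]
      exact Finset.sum_congr rfl (fun n hn => ((hc n) hn).2 x)
    have hpow : ((1-x^2)^(r-k-1))^2 * (1-x^2) = (1 - x^2)^(2*r-2*k-1) := by
      rw [← pow_mul, ← pow_succ]
      congr 1
      omega
    have hT0 : (Q (r-k-1) x)^2 * (1 - x^2) / (2 * (2*(r:ℝ) - 2*k - 1))
        = e0 * (1 - x^2)^(2*r - 2*k - 1) := by
      rw [Q_eq]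
      simp only [eval_mul, eval_C, eval_pow, eval_sub, eval_one, eval_X, he0]
      rw [div_mul_eq_mul_div, ← hpow]
      ring
    simp only [A2, hsum, hT0, eval_sub, eval_C, eval_finset_sum]
    ring
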